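/- Let Ω ⊂ ℝ² be a bounded open convex set and let f, g be asymptotic geodesic lines of (Ω, h_Ω) with common boundary point ξ = f(+∞) = g(+∞) ∈ ∂Ω, with f and g contained in two distinct Euclidean lines. If Ω admits two distinct supporting lines at ξ, then the distance function is bounded away from 0 near infinity: there exist ε > 0 and T ∈ ℝ such that h_Ω(f(t), g(t)) ≥ ε for all t ≥ T. -/

import Mathlib

open Real Filter Set Metric

/- The Hilbert distance on a (bounded open convex) domain `Ω` in Euclidean space:
for `p ≠ q` it is `log ((‖p' - q‖ * ‖q' - p‖) / (‖p' - p‖ * ‖q' - q‖))` where `p', q'`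
are the two boundary points of the chord through `p` and `q`, labelled so that `p` lies
strictly between `p'` and `q`, and `q` lies strictly between `p` and `q'`. -/

open Classical in
noncomputable def hilbertDist {n : ℕ} (Ω : Set (EuclideanSpace ℝ (Fin n)))
    (p q : EuclideanSpace ℝ (Fin n)) : ℝ :=
  if _h : p = q then 0
  else Classical.epsilon fun d : ℝ =>
    ∃ p' q' : EuclideanSpace ℝ (Fin n), p' ∈ frontier Ω ∧ q' ∈ frontier Ω ∧
      p ∈ openSegment ℝ p' q ∧ q ∈ openSegment ℝ p q' ∧
      d = Real.log ((‖p' - q‖ * ‖q' - p‖) / (‖p' - p‖ * ‖q' - q‖))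

/-- A geodesic line of `(Ω, hilbertDist Ω)`: a map `f : ℝ → Ω` whose image lies on a
Euclidean line and which satisfies `hilbertDist Ω (f s) (f t) = |s - t|`. -/
def IsGeodesicLine {n : ℕ} (Ω : Set (EuclideanSpace ℝ (Fin n)))
    (f : ℝ → EuclideanSpace ℝ (Fin n)) : Prop :=
  (∀ t, f t ∈ Ω) ∧ Collinear ℝ (Set.range f) ∧
    ∀ s t : ℝ, hilbertDist Ω (f s) (f t) = |s - t|

/-- A Euclidean (affine) line in the plane. -/
def IsEuclideanLine {n : ℕ} (L : Set (EuclideanSpace ℝ (Fin n))) : Prop :=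
  ∃ a v : EuclideanSpace ℝ (Fin n), v ≠ 0 ∧ L = {x | ∃ t : ℝ, x = a + t • v}

/-- A supporting line of `Ω` at a boundary point `ξ`. -/
def IsSupportLine (Ω : Set (EuclideanSpace ℝ (Fin 2))) (ξ : EuclideanSpace ℝ (Fin 2))
    (L : Set (EuclideanSpace ℝ (Fin 2))) : Prop :=
  IsEuclideanLine L ∧ ξ ∈ L ∧ L ∩ Ω = ∅

local notation "E2" => EuclideanSpace ℝ (Fin 2)

/-- affine functional -/
noncomputable def hilbAux_aff (c d : ℝ) (o x : E2) : ℝ :=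
  c * (x 0 - o 0) + d * (x 1 - o 1)

lemma hilbAux_aff_cont (c d : ℝ) (o : E2) : Continuous (hilbAux_aff c d o) := by
  unfold hilbAux_aff
  exact (continuous_const.mul (((continuous_apply 0).comp (PiLp.continuous_ofLp 2 _)).sub continuous_const)).add
    (continuous_const.mul (((continuous_apply 1).comp (PiLp.continuous_ofLp 2 _)).sub continuous_const))

lemma hilbAux_line_char {v : E2} (hv : v ≠ 0) (a x : E2) :
    (∃ t : ℝ, x = a + t • v) ↔ hilbAux_aff (-(v 1)) (v 0) a x = 0 := by
  unfold hilbAux_aff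
  constructor
  · rintro ⟨t, rfl⟩
    simp only [PiLp.add_apply, PiLp.smul_apply, smul_eq_mul]
    ring
  · intro h
    have hv01 : v 0 ≠ 0 ∨ v 1 ≠ 0 := by
      by_contra hc; push_neg at hc
      exact hv (by ext i; fin_cases i <;> simpa [hc.1, hc.2])
    rcases hv01 with h0 | h1
    · refine ⟨(x 0 - a 0) / v 0, ?_⟩
      ext i; fin_cases i
      · simp only [PiLp.add_apply, PiLp.smul_apply, smul_eq_mul, Fin.zero_eta, Fin.mk_one]
        field_simp
        ring
      · simp only [PiLp.add_apply, PiLp.smul_apply, smul_eq_mul, Fin.zero_eta, Fin.mk_one]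
        field_simp
        nlinarith [h]
    · refine ⟨(x 1 - a 1) / v 1, ?_⟩
      ext i; fin_cases i
      · simp only [PiLp.add_apply, PiLp.smul_apply, smul_eq_mul, Fin.zero_eta, Fin.mk_one]
        field_simp
        nlinarith [h]
      · simp only [PiLp.add_apply, PiLp.smul_apply, smul_eq_mul, Fin.zero_eta, Fin.mk_one]
        field_simp
        ring

lemma hilbAux_detzero {c₁ d₁ c₂ d₂ a b : ℝ} (h : c₁ * d₂ - c₂ * d₁ = 0)
    (h1 : ¬(c₁ = 0 ∧ d₁ = 0)) (hz : c₁ * a + d₁ * b = 0) : c₂ * a + d₂ * b = 0 := by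
  rcases not_and_or.mp h1 with hc | hd
  · have hmul : c₁ * (c₂ * a + d₂ * b) = 0 := by linear_combination c₂ * hz + b * h
    exact (mul_eq_zero.mp hmul).resolve_left hc
  · have hmul : d₁ * (c₂ * a + d₂ * b) = 0 := by linear_combination d₂ * hz - a * h
    exact (mul_eq_zero.mp hmul).resolve_left hd

lemma hilbAux_line_through (v a b : E2) (hb : ∃ t : ℝ, b = a + t • v) :
    {x : E2 | ∃ t : ℝ, x = a + t • v} = {x : E2 | ∃ t : ℝ, x = b + t • v} := by
  obtain ⟨t₀, rfl⟩ := hb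
  ext x
  constructor
  · rintro ⟨t, rfl⟩; exact ⟨t - t₀, by module⟩
  · rintro ⟨t, rfl⟩; exact ⟨t₀ + t, by module⟩

lemma hilbAux_exit {Ω : Set E2} (hopen : IsOpen Ω) (hbdd : Bornology.IsBounded Ω)
    {p q : E2} (hp : p ∈ Ω) (hq : q ∈ Ω) (hpq : p ≠ q) :
    ∃ y ∈ frontier Ω, p ∈ openSegment ℝ y q := by
  set φ : ℝ → E2 := fun r => q + r • (p - q) with hφ
  have hφc : Continuous φ := by
    exact continuous_const.add (continuous_id.smul continuous_const)
  set R : Set ℝ := φ ⁻¹' Ω with hR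
  have hRopen : IsOpen R := hopen.preimage hφc
  have h1R : (1 : ℝ) ∈ R := by
    show φ 1 ∈ Ω
    simp only [hφ, one_smul]
    simpa using hp
  obtain ⟨M, hM⟩ := isBounded_iff_forall_norm_le.mp hbdd
  have hpqn : (0 : ℝ) < ‖p - q‖ := by
    rw [norm_pos_iff]; exact sub_ne_zero.mpr hpq
  have hbddA : BddAbove R := by
    refine ⟨(M + ‖q‖) / ‖p - q‖, fun r hr => ?_⟩
    have h1 : ‖φ r‖ ≤ M := hM _ hr
    have h2 : ‖r • (p - q)‖ ≤ ‖φ r‖ + ‖q‖ := by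
      have he : r • (p - q) = φ r - q := by simp [hφ]
      rw [he]
      exact norm_sub_le _ _
    have h3 : |r| * ‖p - q‖ ≤ M + ‖q‖ := by
      have hn : ‖r • (p - q)‖ = |r| * ‖p - q‖ := by rw [norm_smul, Real.norm_eq_abs]
      linarith
    rw [le_div_iff₀ hpqn]
    calc r * ‖p - q‖ ≤ |r| * ‖p - q‖ := by
          have := le_abs_self r
          nlinarith
      _ ≤ M + ‖q‖ := h3
  set B := sSup R with hB
  have hBc : B ∈ closure R := csSup_mem_closure ⟨1, h1R⟩ hbddA
  have hBnot : B ∉ R := by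
    intro hBR
    obtain ⟨ε, hε, hball⟩ := Metric.isOpen_iff.mp hRopen B hBR
    have hmem : B + ε / 2 ∈ R := by
      apply hball
      simp only [Metric.mem_ball, Real.dist_eq]
      rw [abs_of_pos (by linarith)]
      linarith
    have := le_csSup hbddA hmem
    linarith
  have hB1 : 1 < B := by
    obtain ⟨ε, hε, hball⟩ := Metric.isOpen_iff.mp hRopen 1 h1R
    have hmem : 1 + ε / 2 ∈ R := by
      apply hball
      simp only [Metric.mem_ball, Real.dist_eq]
      rw [abs_of_pos (by linarith)]
      linarith
    have := le_csSup hbddA hmem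
    linarith
  have hB0 : (0 : ℝ) < B := by linarith
  refine ⟨φ B, ?_, ?_⟩
  · rw [hopen.frontier_eq]
    exact ⟨map_mem_closure hφc hBc fun r hr => hr, hBnot⟩
  · refine ⟨1 / B, 1 - 1 / B, by positivity, ?_, by ring, ?_⟩
    · have : 1 / B < 1 := by rw [div_lt_one hB0]; linarith
      linarith
    · show (1 / B) • (q + B • (p - q)) + (1 - 1 / B) • q = p
      match_scalars <;> field_simp <;> ring

lemma hilbAux_support {Ω : Set E2} (hconv : Convex ℝ Ω) (hne : Ω.Nonempty)
    {ξ : E2} {L : Set E2}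
    (hL : (∃ a v : E2, v ≠ 0 ∧ L = {x | ∃ t : ℝ, x = a + t • v}) ∧ ξ ∈ L ∧ L ∩ Ω = ∅) :
    ∃ c d : ℝ, ¬(c = 0 ∧ d = 0) ∧ (∀ x, x ∈ L ↔ hilbAux_aff c d ξ x = 0) ∧
      ∀ x ∈ Ω, hilbAux_aff c d ξ x < 0 := by
  obtain ⟨⟨a, v, hv, hLeq⟩, hξL, hdisj⟩ := hL
  have hchar : ∀ x, x ∈ L ↔ hilbAux_aff (-(v 1)) (v 0) ξ x = 0 := by
    obtain ⟨t₀, ht₀⟩ : ∃ t : ℝ, ξ = a + t • v := by rw [hLeq] at hξL; exact hξL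
    have e0 : ξ 0 = a 0 + t₀ * v 0 := by
      rw [ht₀]; simp [PiLp.add_apply, PiLp.smul_apply]
    have e1 : ξ 1 = a 1 + t₀ * v 1 := by
      rw [ht₀]; simp [PiLp.add_apply, PiLp.smul_apply]
    intro x
    rw [hLeq]
    show (∃ t : ℝ, x = a + t • v) ↔ _
    rw [hilbAux_line_char hv]
    unfold hilbAux_aff
    constructor <;> intro h
    · linear_combination h - v 0 * e1 + v 1 * e0
    · linear_combination h + v 0 * e1 - v 1 * e0
  have hnz : ∀ x ∈ Ω, hilbAux_aff (-(v 1)) (v 0) ξ x ≠ 0 := by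
    intro x hx h0
    have : x ∈ L ∩ Ω := ⟨(hchar x).mpr h0, hx⟩
    rw [hdisj] at this
    exact this
  have hIVT : ∀ x₀ ∈ Ω, ∀ x₁ ∈ Ω, hilbAux_aff (-(v 1)) (v 0) ξ x₀ < 0 →
      0 < hilbAux_aff (-(v 1)) (v 0) ξ x₁ → False := by
    intro x₀ hx₀ x₁ hx₁ hneg hpos
    set F := hilbAux_aff (-(v 1)) (v 0) ξ with hF
    set γ : ℝ → E2 := fun s => x₀ + s • (x₁ - x₀) with hγ
    have hγc : Continuous γ := continuous_const.add (continuous_id.smul continuous_const)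
    have hG : ContinuousOn (F ∘ γ) (Set.Icc 0 1) :=
      ((hilbAux_aff_cont _ _ _).comp hγc).continuousOn
    have h01 : (0:ℝ) ≤ 1 := by norm_num
    have := intermediate_value_Icc h01 hG
    have h0mem : (0:ℝ) ∈ Set.Icc ((F ∘ γ) 0) ((F ∘ γ) 1) := by
      constructor
      · show (F (x₀ + (0:ℝ) • (x₁ - x₀))) ≤ 0
        simpa using le_of_lt hneg
      · show (0:ℝ) ≤ F (x₀ + (1:ℝ) • (x₁ - x₀))
        have : x₀ + (1:ℝ) • (x₁ - x₀) = x₁ := by module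
        rw [this]
        exact le_of_lt hpos
    obtain ⟨s, hs, hFs⟩ := this h0mem
    have hγΩ : γ s ∈ Ω := by
      have hmem := hconv hx₀ hx₁ (by linarith [hs.2] : (0:ℝ) ≤ 1 - s) hs.1 (by ring)
      have : (1 - s) • x₀ + s • x₁ = γ s := by simp only [hγ]; module
      rwa [this] at hmem
    exact hnz _ hγΩ hFs
  by_cases hex : ∃ x ∈ Ω, hilbAux_aff (-(v 1)) (v 0) ξ x < 0
  · obtain ⟨x₀, hx₀, hx₀neg⟩ := hex
    refine ⟨-(v 1), v 0, ?_, hchar, ?_⟩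
    · rintro ⟨h1, h0⟩
      apply hv
      ext i; fin_cases i
      · simpa using h0
      · simpa using (neg_eq_zero.mp h1)
    · intro x hx
      rcases lt_trichotomy (hilbAux_aff (-(v 1)) (v 0) ξ x) 0 with h | h | h
      · exact h
      · exact absurd h (hnz x hx)
      · exact absurd (hIVT x₀ hx₀ x hx hx₀neg h) id
  · push_neg at hex
    refine ⟨v 1, -(v 0), ?_, ?_, ?_⟩
    · rintro ⟨h1, h0⟩
      apply hv
      ext i; fin_cases i
      · simpa using (neg_eq_zero.mp h0)
      · simpa using h1
    · intro x
      rw [hchar x]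
      unfold hilbAux_aff
      constructor <;> intro h <;> linarith
    · intro x hx
      have h1 := hex x hx
      have h2 := hnz x hx
      unfold hilbAux_aff at *
      rcases lt_or_eq_of_le h1 with h | h
      · linarith
      · exact absurd h.symm h2

set_option maxHeartbeats 1000000 in
lemma hilbAux_lb {Ω : Set E2} (hopen : IsOpen Ω) (hbdd : Bornology.IsBounded Ω)
    (c₁ d₁ c₂ d₂ : ℝ) (ξ : E2)
    (h1 : ∀ x ∈ Ω, hilbAux_aff c₁ d₁ ξ x < 0)
    (h2 : ∀ x ∈ Ω, hilbAux_aff c₂ d₂ ξ x < 0)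
    {p q : E2} (hp : p ∈ Ω) (hq : q ∈ Ω) (hpq : p ≠ q) :
    Real.log ((hilbAux_aff c₁ d₁ ξ q * hilbAux_aff c₂ d₂ ξ p) /
      (hilbAux_aff c₁ d₁ ξ p * hilbAux_aff c₂ d₂ ξ q)) ≤ hilbertDist Ω p q := by
  -- frontier bounds
  have hfr1 : ∀ y ∈ frontier Ω, hilbAux_aff c₁ d₁ ξ y ≤ 0 := by
    intro y hy
    have hcl : closure Ω ⊆ {x : E2 | hilbAux_aff c₁ d₁ ξ x ≤ 0} :=
      closure_minimal (fun x hx => le_of_lt (h1 x hx))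
        (isClosed_le (hilbAux_aff_cont _ _ _) continuous_const)
    exact hcl (frontier_subset_closure hy)
  have hfr2 : ∀ y ∈ frontier Ω, hilbAux_aff c₂ d₂ ξ y ≤ 0 := by
    intro y hy
    have hcl : closure Ω ⊆ {x : E2 | hilbAux_aff c₂ d₂ ξ x ≤ 0} :=
      closure_minimal (fun x hx => le_of_lt (h2 x hx))
        (isClosed_le (hilbAux_aff_cont _ _ _) continuous_const)
    exact hcl (frontier_subset_closure hy)
  obtain ⟨p₀, hp₀F, hpseg₀⟩ := hilbAux_exit hopen hbdd hp hq hpq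
  obtain ⟨q₀, hq₀F, hqseg₀'⟩ := hilbAux_exit hopen hbdd hq hp hpq.symm
  have hqseg₀ : q ∈ openSegment ℝ p q₀ := by rwa [openSegment_symm] at hqseg₀'
  have hex : ∃ d : ℝ, ∃ p' q' : EuclideanSpace ℝ (Fin 2), p' ∈ frontier Ω ∧ q' ∈ frontier Ω ∧
      p ∈ openSegment ℝ p' q ∧ q ∈ openSegment ℝ p q' ∧
      d = Real.log ((‖p' - q‖ * ‖q' - p‖) / (‖p' - p‖ * ‖q' - q‖)) :=
    ⟨_, p₀, q₀, hp₀F, hq₀F, hpseg₀, hqseg₀, rfl⟩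
  unfold hilbertDist
  rw [dif_neg hpq]
  obtain ⟨a', b', haF, hbF, haseg, hbseg, hd⟩ := Classical.epsilon_spec hex
  rw [hd]
  obtain ⟨θ, θ', hθ, hθ', hθs, hθe⟩ := haseg
  obtain ⟨σ, σ', hσ, hσ', hσs, hσe⟩ := hbseg
  have hpqn : (0 : ℝ) < ‖p - q‖ := by rw [norm_pos_iff]; exact sub_ne_zero.mpr hpq
  -- norm identities
  have k1 : θ • (a' - p) = θ' • (p - q) := by
    have h : θ • a' = p - θ' • q := eq_sub_of_add_eq hθe
    have : θ • (a' - p) = θ • a' - θ • p := smul_sub _ _ _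
    rw [this, h]
    match_scalars <;> linarith
  have k2 : θ • (a' - q) = p - q := by
    have h : θ • a' = p - θ' • q := eq_sub_of_add_eq hθe
    have : θ • (a' - q) = θ • a' - θ • q := smul_sub _ _ _
    rw [this, h]
    match_scalars <;> linarith
  have k3 : σ' • (b' - q) = σ • (q - p) := by
    have h : σ' • b' = q - σ • p := by
      have := hσe; rw [add_comm] at this; exact eq_sub_of_add_eq this
    have : σ' • (b' - q) = σ' • b' - σ' • q := smul_sub _ _ _
    rw [this, h]
    match_scalars <;> linarith
  have k4 : σ' • (b' - p) = q - p := by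
    have h : σ' • b' = q - σ • p := by
      have := hσe; rw [add_comm] at this; exact eq_sub_of_add_eq this
    have : σ' • (b' - p) = σ' • b' - σ' • p := smul_sub _ _ _
    rw [this, h]
    match_scalars <;> linarith
  have hqpn : ‖q - p‖ = ‖p - q‖ := norm_sub_rev _ _
  have n1 : θ * ‖a' - p‖ = θ' * ‖p - q‖ := by
    have := congrArg norm k1
    rwa [norm_smul, norm_smul, Real.norm_eq_abs, Real.norm_eq_abs,
      abs_of_pos hθ, abs_of_pos hθ'] at this
  have n2 : θ * ‖a' - q‖ = ‖p - q‖ := by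
    have := congrArg norm k2
    rwa [norm_smul, Real.norm_eq_abs, abs_of_pos hθ] at this
  have n3 : σ' * ‖b' - q‖ = σ * ‖p - q‖ := by
    have := congrArg norm k3
    rwa [norm_smul, norm_smul, Real.norm_eq_abs, Real.norm_eq_abs,
      abs_of_pos hσ', abs_of_pos hσ, hqpn] at this
  have n4 : σ' * ‖b' - p‖ = ‖p - q‖ := by
    have := congrArg norm k4
    rwa [norm_smul, Real.norm_eq_abs, abs_of_pos hσ', hqpn] at this
  have hCR : (‖a' - q‖ * ‖b' - p‖) / (‖a' - p‖ * ‖b' - q‖) = (θ' * σ)⁻¹ := by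
    have hap : ‖a' - p‖ = θ' * ‖p - q‖ / θ := by field_simp; linarith
    have haq : ‖a' - q‖ = ‖p - q‖ / θ := by field_simp; linarith
    have hbq : ‖b' - q‖ = σ * ‖p - q‖ / σ' := by field_simp; linarith
    have hbp : ‖b' - p‖ = ‖p - q‖ / σ' := by field_simp; linarith
    rw [hap, haq, hbq, hbp]
    have hθne : θ ≠ 0 := ne_of_gt hθ
    have hθ'ne : θ' ≠ 0 := ne_of_gt hθ'
    have hσne : σ ≠ 0 := ne_of_gt hσ
    have hσ'ne : σ' ≠ 0 := ne_of_gt hσ'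
    have hpqne : ‖p - q‖ ≠ 0 := ne_of_gt hpqn
    field_simp
  rw [hCR]
  -- scalar inequalities
  have e0 : θ * a' 0 + θ' * q 0 = p 0 := by
    have : (θ • a' + θ' • q) 0 = p 0 := by rw [hθe]
    simpa [PiLp.add_apply, PiLp.smul_apply] using this
  have e1 : θ * a' 1 + θ' * q 1 = p 1 := by
    have : (θ • a' + θ' • q) 1 = p 1 := by rw [hθe]
    simpa [PiLp.add_apply, PiLp.smul_apply] using this
  have f0 : σ * p 0 + σ' * b' 0 = q 0 := by
    have : (σ • p + σ' • b') 0 = q 0 := by rw [hσe]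
    simpa [PiLp.add_apply, PiLp.smul_apply] using this
  have f1 : σ * p 1 + σ' * b' 1 = q 1 := by
    have : (σ • p + σ' • b') 1 = q 1 := by rw [hσe]
    simpa [PiLp.add_apply, PiLp.smul_apply] using this
  set A₁ := hilbAux_aff c₁ d₁ ξ p with hA₁
  set B₁ := hilbAux_aff c₁ d₁ ξ q with hB₁
  set A₂ := hilbAux_aff c₂ d₂ ξ p with hA₂
  set B₂ := hilbAux_aff c₂ d₂ ξ q with hB₂
  have hA₁neg : A₁ < 0 := h1 p hp
  have hB₁neg : B₁ < 0 := h1 q hq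
  have hA₂neg : A₂ < 0 := h2 p hp
  have hB₂neg : B₂ < 0 := h2 q hq
  have key1 : A₁ ≤ θ' * B₁ := by
    have hval : θ * hilbAux_aff c₁ d₁ ξ a' = A₁ - θ' * B₁ := by
      rw [hA₁, hB₁]
      unfold hilbAux_aff
      linear_combination c₁ * e0 + d₁ * e1 - (c₁ * ξ 0 + d₁ * ξ 1) * hθs
    have hle : θ * hilbAux_aff c₁ d₁ ξ a' ≤ 0 :=
      mul_nonpos_of_nonneg_of_nonpos (le_of_lt hθ) (hfr1 a' haF)
    linarith [hval ▸ hle]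
  have key2 : B₂ ≤ σ * A₂ := by
    have hval : σ' * hilbAux_aff c₂ d₂ ξ b' = B₂ - σ * A₂ := by
      rw [hA₂, hB₂]
      unfold hilbAux_aff
      linear_combination c₂ * f0 + d₂ * f1 - (c₂ * ξ 0 + d₂ * ξ 1) * hσs
    have hle : σ' * hilbAux_aff c₂ d₂ ξ b' ≤ 0 :=
      mul_nonpos_of_nonneg_of_nonpos (le_of_lt hσ') (hfr2 b' hbF)
    linarith [hval ▸ hle]
  have hargpos : 0 < (B₁ * A₂) / (A₁ * B₂) :=
    div_pos (mul_pos_of_neg_of_neg hB₁neg hA₂neg) (mul_pos_of_neg_of_neg hA₁neg hB₂neg)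
  apply Real.log_le_log hargpos
  rw [inv_eq_one_div, div_le_div_iff₀ (mul_pos_of_neg_of_neg hA₁neg hB₂neg)
    (by positivity : (0:ℝ) < θ' * σ)]
  nlinarith [mul_le_mul_of_nonpos_right key1 (le_of_lt hB₂neg),
    mul_le_mul_of_nonpos_left key2 (by nlinarith : θ' * B₁ ≤ 0)]

lemma hilbAux_val (s c d : ℝ) (ξ u : E2) :
    hilbAux_aff c d ξ (ξ + s • u) = s * (c * u 0 + d * u 1) := by
  unfold hilbAux_aff
  simp only [PiLp.add_apply, PiLp.smul_apply, smul_eq_mul]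
  ring

theorem nonsmooth_boundary_distance_bounded_away_from_zero
    (Ω : Set (EuclideanSpace ℝ (Fin 2)))
    (hopen : IsOpen Ω) (hconv : Convex ℝ Ω) (hbdd : Bornology.IsBounded Ω)
    (f g : ℝ → EuclideanSpace ℝ (Fin 2)) (ξ : EuclideanSpace ℝ (Fin 2))
    (hf : IsGeodesicLine Ω f) (hg : IsGeodesicLine Ω g)
    (hξ : ξ ∈ frontier Ω)
    (hfξ : Tendsto f atTop (nhds ξ)) (hgξ : Tendsto g atTop (nhds ξ))
    (hdistinct : ∃ L₁ L₂ : Set (EuclideanSpace ℝ (Fin 2)),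
      IsEuclideanLine L₁ ∧ IsEuclideanLine L₂ ∧
      Set.range f ⊆ L₁ ∧ Set.range g ⊆ L₂ ∧ L₁ ≠ L₂)
    (hsupp : ∃ L₁ L₂ : Set (EuclideanSpace ℝ (Fin 2)),
      IsSupportLine Ω ξ L₁ ∧ IsSupportLine Ω ξ L₂ ∧ L₁ ≠ L₂) :
    ∃ ε > 0, ∃ T : ℝ, ∀ t ≥ T, ε ≤ hilbertDist Ω (f t) (g t) := by
  obtain ⟨Lf, Lg, ⟨af, uf, huf, hLfeq⟩, ⟨ag, ug, hug, hLgeq⟩, hrf, hrg, hLne⟩ := hdistinct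
  obtain ⟨hfΩ, -, -⟩ := hf
  obtain ⟨hgΩ, -, -⟩ := hg
  -- lines are closed, so ξ lies on both
  have hclosed : ∀ (a v : E2), v ≠ 0 → IsClosed {x : E2 | ∃ t : ℝ, x = a + t • v} := by
    intro a v hv
    have : {x : E2 | ∃ t : ℝ, x = a + t • v} = {x : E2 | hilbAux_aff (-(v 1)) (v 0) a x = 0} := by
      ext x; exact hilbAux_line_char hv a x
    rw [this]
    exact isClosed_eq (hilbAux_aff_cont _ _ _) continuous_const
  have hfmem : ∀ t, f t ∈ Lf := fun t => hrf ⟨t, rfl⟩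
  have hgmem : ∀ t, g t ∈ Lg := fun t => hrg ⟨t, rfl⟩
  have hξf : ξ ∈ Lf := by
    rw [hLfeq]
    exact (hclosed af uf huf).mem_of_tendsto hfξ
      (Filter.Eventually.of_forall fun t => by rw [← hLfeq]; exact hfmem t)
  have hξg : ξ ∈ Lg := by
    rw [hLgeq]
    exact (hclosed ag ug hug).mem_of_tendsto hgξ
      (Filter.Eventually.of_forall fun t => by rw [← hLgeq]; exact hgmem t)
  have hLf' : Lf = {x : E2 | ∃ s : ℝ, x = ξ + s • uf} := by
    rw [hLfeq]
    exact hilbAux_line_through uf af ξ (by rw [hLfeq] at hξf; exact hξf)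
  have hLg' : Lg = {x : E2 | ∃ s : ℝ, x = ξ + s • ug} := by
    rw [hLgeq]
    exact hilbAux_line_through ug ag ξ (by rw [hLgeq] at hξg; exact hξg)
  have hfpar : ∀ t, ∃ s : ℝ, f t = ξ + s • uf := fun t => by
    have := hfmem t; rw [hLf'] at this; exact this
  have hgpar : ∀ t, ∃ s : ℝ, g t = ξ + s • ug := fun t => by
    have := hgmem t; rw [hLg'] at this; exact this
  -- distinct directions
  have hcross : uf 0 * ug 1 - uf 1 * ug 0 ≠ 0 := by
    intro h
    apply hLne
    have hpar : ∃ t : ℝ, ug = (0 : E2) + t • uf := by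
      rw [hilbAux_line_char huf]
      unfold hilbAux_aff
      simp only [show ((0 : E2)) 0 = 0 from rfl, show ((0 : E2)) 1 = 0 from rfl]
      ring_nf
      ring_nf at h
      linarith
    obtain ⟨t, ht⟩ := hpar
    have ht' : ug = t • uf := by simpa using ht
    have htne : t ≠ 0 := by
      rintro rfl
      rw [zero_smul] at ht'
      exact hug ht'
    rw [hLf', hLg', ht']
    ext x
    constructor
    · rintro ⟨s, rfl⟩
      exact ⟨s / t, by rw [smul_smul, div_mul_cancel₀ _ htne]⟩
    · rintro ⟨s, rfl⟩
      exact ⟨s * t, by rw [smul_smul]⟩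
  -- support functionals
  obtain ⟨S₁, S₂, hS₁, hS₂, hSne⟩ := hsupp
  have hΩne : Ω.Nonempty := ⟨f 0, hfΩ 0⟩
  obtain ⟨⟨aS₁, vS₁, hvS₁, hS₁eq⟩, hξS₁, hdisj₁⟩ := hS₁
  obtain ⟨⟨aS₂, vS₂, hvS₂, hS₂eq⟩, hξS₂, hdisj₂⟩ := hS₂
  obtain ⟨c₁, d₁, hnz₁, hchar₁, hneg₁⟩ :=
    hilbAux_support hconv hΩne (L := S₁) ⟨⟨aS₁, vS₁, hvS₁, hS₁eq⟩, hξS₁, hdisj₁⟩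
  obtain ⟨c₂, d₂, hnz₂, hchar₂, hneg₂⟩ :=
    hilbAux_support hconv hΩne (L := S₂) ⟨⟨aS₂, vS₂, hvS₂, hS₂eq⟩, hξS₂, hdisj₂⟩
  have hdet : c₁ * d₂ - c₂ * d₁ ≠ 0 := by
    intro h
    apply hSne
    ext x
    rw [hchar₁ x, hchar₂ x]
    unfold hilbAux_aff
    constructor
    · intro hx; exact hilbAux_detzero h hnz₁ hx
    · intro hx; exact hilbAux_detzero (by linarith) hnz₂ hx
  -- the key constants
  set W1u := c₁ * uf 0 + d₁ * uf 1 with hW1u_def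
  set W2u := c₂ * uf 0 + d₂ * uf 1 with hW2u_def
  set W1v := c₁ * ug 0 + d₁ * ug 1 with hW1v_def
  set W2v := c₂ * ug 0 + d₂ * ug 1 with hW2v_def
  obtain ⟨s₀, hs₀⟩ := hfpar 0
  obtain ⟨s₀', hs₀'⟩ := hgpar 0
  have hf01 : s₀ * W1u < 0 := by
    have := hneg₁ _ (hfΩ 0); rw [hs₀, hilbAux_val] at this; exact this
  have hf02 : s₀ * W2u < 0 := by
    have := hneg₂ _ (hfΩ 0); rw [hs₀, hilbAux_val] at this; exact this
  have hg01 : s₀' * W1v < 0 := by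
    have := hneg₁ _ (hgΩ 0); rw [hs₀', hilbAux_val] at this; exact this
  have hg02 : s₀' * W2v < 0 := by
    have := hneg₂ _ (hgΩ 0); rw [hs₀', hilbAux_val] at this; exact this
  have hW1u : W1u ≠ 0 := fun h => by rw [h, mul_zero] at hf01; exact lt_irrefl 0 hf01
  have hW2u : W2u ≠ 0 := fun h => by rw [h, mul_zero] at hf02; exact lt_irrefl 0 hf02
  have hW1v : W1v ≠ 0 := fun h => by rw [h, mul_zero] at hg01; exact lt_irrefl 0 hg01
  have hW2v : W2v ≠ 0 := fun h => by rw [h, mul_zero] at hg02; exact lt_irrefl 0 hg02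
  have hs₀ne : s₀ ≠ 0 := fun h => by rw [h, zero_mul] at hf01; exact lt_irrefl 0 hf01
  have hs₀'ne : s₀' ≠ 0 := fun h => by rw [h, zero_mul] at hg01; exact lt_irrefl 0 hg01
  set κ := (W1v * W2u) / (W1u * W2v) with hκ_def
  have hκpos : 0 < κ := by
    have h0 : 0 < ((s₀' * W1v) * (s₀ * W2u)) / ((s₀ * W1u) * (s₀' * W2v)) :=
      div_pos (mul_pos_of_neg_of_neg hg01 hf02) (mul_pos_of_neg_of_neg hf01 hg02)
    have heq : ((s₀' * W1v) * (s₀ * W2u)) / ((s₀ * W1u) * (s₀' * W2v)) = κ := by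
      rw [hκ_def]
      field_simp
    rwa [heq] at h0
  have hκne : κ ≠ 1 := by
    intro h
    rw [hκ_def, div_eq_one_iff_eq (mul_ne_zero hW1u hW2v)] at h
    have hfact : (c₁ * d₂ - c₂ * d₁) * (uf 0 * ug 1 - uf 1 * ug 0) = 0 := by
      rw [hW1v_def, hW2u_def, hW1u_def, hW2v_def] at h
      linear_combination -h
    exact (mul_ne_zero hdet hcross) hfact
  refine ⟨Real.log (max κ κ⁻¹), ?_, 0, ?_⟩
  · apply Real.log_pos
    rcases lt_trichotomy κ 1 with h | h | h
    · have : 1 < κ⁻¹ := (one_lt_inv₀ hκpos).mpr h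
      exact lt_of_lt_of_le this (le_max_right _ _)
    · exact absurd h hκne
    · exact lt_of_lt_of_le h (le_max_left _ _)
  · intro t _
    obtain ⟨s, hs⟩ := hfpar t
    obtain ⟨s', hs'⟩ := hgpar t
    have hft1 : s * W1u < 0 := by
      have := hneg₁ _ (hfΩ t); rw [hs, hilbAux_val] at this; exact this
    have hft2 : s * W2u < 0 := by
      have := hneg₂ _ (hfΩ t); rw [hs, hilbAux_val] at this; exact this
    have hgt1 : s' * W1v < 0 := by
      have := hneg₁ _ (hgΩ t); rw [hs', hilbAux_val] at this; exact this
    have hgt2 : s' * W2v < 0 := by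
      have := hneg₂ _ (hgΩ t); rw [hs', hilbAux_val] at this; exact this
    have hsne : s ≠ 0 := fun h => by rw [h, zero_mul] at hft1; exact lt_irrefl 0 hft1
    have hs'ne : s' ≠ 0 := fun h => by rw [h, zero_mul] at hgt1; exact lt_irrefl 0 hgt1
    have hne : f t ≠ g t := by
      intro h
      have hv : s • uf = s' • ug := by
        have := hs ▸ hs' ▸ h
        exact add_left_cancel this
      have e0 : s * uf 0 = s' * ug 0 := by
        have : (s • uf) 0 = (s' • ug) 0 := by rw [hv]
        simpa [PiLp.smul_apply] using this
      have e1 : s * uf 1 = s' * ug 1 := by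
        have : (s • uf) 1 = (s' • ug) 1 := by rw [hv]
        simpa [PiLp.smul_apply] using this
      apply hcross
      have : s * (uf 0 * ug 1 - uf 1 * ug 0) = 0 := by
        linear_combination ug 1 * e0 - ug 0 * e1
      rcases mul_eq_zero.mp this with h' | h'
      · exact absurd h' hsne
      · exact h'
    have h₁ := hilbAux_lb hopen hbdd c₁ d₁ c₂ d₂ ξ hneg₁ hneg₂ (hfΩ t) (hgΩ t) hne
    have h₂ := hilbAux_lb hopen hbdd c₂ d₂ c₁ d₁ ξ hneg₂ hneg₁ (hfΩ t) (hgΩ t) hne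
    rw [hs, hs', hilbAux_val, hilbAux_val, hilbAux_val, hilbAux_val] at h₁ h₂
    have harg1 : (s' * W1v * (s * W2u)) / (s * W1u * (s' * W2v)) = κ := by
      rw [hκ_def]; field_simp
    have harg2 : (s' * W2v * (s * W1u)) / (s * W2u * (s' * W1v)) = κ⁻¹ := by
      rw [hκ_def]
      rw [inv_div]
      field_simp
    rw [harg1] at h₁
    rw [harg2] at h₂
    rcases max_choice κ κ⁻¹ with h | h <;> rw [h, hs, hs']
    · exact h₁
    · exact h₂
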